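/- Assume C has enough C-projectives and is covariantly finite in mod Λ. Then S(C) is covariantly finite in the monomorphism category S(mod Λ) of all injective morphisms between finite-dimensional Λ-modules: every injective Λ-linear map between finite-dimensional Λ-modules admits a left S(C)-approximation in the arrow category of mod Λ. -/

import Mathlib

open CategoryTheory CategoryTheory.Limits

universe u

section Defs
variable {Λ : Type u} [Ring Λ]

/-- A short exact sequence `0 → X → Y → Z → 0` of Λ-modules. -/
def ShortExactSeq {X Y Z : ModuleCat.{u} Λ} (f : X ⟶ Y) (g : Y ⟶ Z) : Prop :=
  Function.Injective f ∧ Function.Surjective g ∧ Function.Exact f g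

variable (C : Set (ModuleCat.{u} Λ))

/-- An inflation of the exact category `C`: an injective map between objects of `C`
whose cokernel lies in `C`. -/
def IsInflation {X Y : ModuleCat.{u} Λ} (f : X ⟶ Y) : Prop :=
  X ∈ C ∧ Y ∈ C ∧ Function.Injective f ∧ ∃ Z ∈ C, ∃ g : Y ⟶ Z, ShortExactSeq f g

/-- A deflation of the exact category `C`: a surjective map between objects of `C`
whose kernel lies in `C`. -/
def IsDeflation {X Y : ModuleCat.{u} Λ} (f : X ⟶ Y) : Prop :=
  X ∈ C ∧ Y ∈ C ∧ Function.Surjective f ∧ ∃ Z ∈ C, ∃ g : Z ⟶ X, ShortExactSeq g f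

/-- The monomorphism category `S(C)`, as a subcategory of the arrow category. -/
def SMono : Set (Arrow (ModuleCat.{u} Λ)) := {a | IsInflation C a.hom}

/-- The epimorphism category `F(C)`, as a subcategory of the arrow category. -/
def FEpi : Set (Arrow (ModuleCat.{u} Λ)) := {a | IsDeflation C a.hom}

/-- `I` is a `C`-injective object. -/
def CInjective (I : ModuleCat.{u} Λ) : Prop :=
  I ∈ C ∧ ∀ (U V : ModuleCat.{u} Λ), U ∈ C → V ∈ C →
    ∀ (f : I ⟶ U) (g : U ⟶ V), ShortExactSeq f g → ∃ r : U ⟶ I, f ≫ r = 𝟙 I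

/-- `P` is a `C`-projective object. -/
def CProjective (P : ModuleCat.{u} Λ) : Prop :=
  P ∈ C ∧ ∀ (U V : ModuleCat.{u} Λ), U ∈ C → V ∈ C →
    ∀ (f : U ⟶ V) (g : V ⟶ P), ShortExactSeq f g → ∃ s : P ⟶ V, s ≫ g = 𝟙 P

/-- `C` has enough `C`-injectives. -/
def EnoughCInjectives : Prop :=
  ∀ X ∈ C, ∃ (I X' : ModuleCat.{u} Λ), CInjective C I ∧ X' ∈ C ∧
    ∃ (e : X ⟶ I) (q : I ⟶ X'), ShortExactSeq e q

/-- `C` has enough `C`-projectives. -/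
def EnoughCProjectives : Prop :=
  ∀ X ∈ C, ∃ (P X' : ModuleCat.{u} Λ), CProjective C P ∧ X' ∈ C ∧
    ∃ (q : X' ⟶ P) (p : P ⟶ X), ShortExactSeq q p

def ClosedUnderIso : Prop := ∀ (M N : ModuleCat.{u} Λ), (M ≅ N) → M ∈ C → N ∈ C
def ContainsZero : Prop := ∀ M : ModuleCat.{u} Λ, Subsingleton M → M ∈ C
def ClosedUnderSums : Prop := ∀ M N : ModuleCat.{u} Λ, M ∈ C → N ∈ C → (M ⊞ N) ∈ C
def ClosedUnderExtensions : Prop :=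
  ∀ (X Y Z : ModuleCat.{u} Λ) (f : X ⟶ Y) (g : Y ⟶ Z),
    X ∈ C → Z ∈ C → ShortExactSeq f g → Y ∈ C

end Defs

section Approx
variable {A : Type*} [Category A] (D : Set A)

/-- `g : Y ⟶ Z` is a right `D`-approximation of `Z`. -/
def IsRightApprox {Y Z : A} (g : Y ⟶ Z) : Prop :=
  Y ∈ D ∧ ∀ W ∈ D, ∀ u : W ⟶ Z, ∃ v : W ⟶ Y, v ≫ g = u

/-- `g : Z ⟶ Y` is a left `D`-approximation of `Z`. -/
def IsLeftApprox {Z Y : A} (g : Z ⟶ Y) : Prop :=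
  Y ∈ D ∧ ∀ W ∈ D, ∀ u : Z ⟶ W, ∃ v : Y ⟶ W, g ≫ v = u

end Approx

section Finiteness
variable {Λ : Type u} [Ring Λ]

/-- Contravariant finiteness of `C` in `mod Λ` (the finite-dimensional Λ-modules). -/
def ContravariantlyFinite (C : Set (ModuleCat.{u} Λ)) : Prop :=
  ∀ M : ModuleCat.{u} Λ, Module.Finite Λ M →
    ∃ (Y : ModuleCat.{u} Λ) (g : Y ⟶ M), IsRightApprox C g

/-- Covariant finiteness of `C` in `mod Λ`. -/
def CovariantlyFinite (C : Set (ModuleCat.{u} Λ)) : Prop :=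
  ∀ M : ModuleCat.{u} Λ, Module.Finite Λ M →
    ∃ (Y : ModuleCat.{u} Λ) (g : M ⟶ Y), IsLeftApprox C g

end Finiteness

/-- If `C` has enough `C`-projectives and is covariantly finite in `mod Λ`,
then `S(C)` is covariantly finite in `S(mod Λ)`: every injective map between
finite-dimensional Λ-modules admits a left `S(C)`-approximation in the arrow category. -/
theorem smono_covariantly_finite
    (k : Type u) [Field k] (Λ : Type u) [Ring Λ] [Algebra k Λ] [FiniteDimensional k Λ]
    (C : Set (ModuleCat.{u} Λ))
    (hCfd : ∀ M ∈ C, Module.Finite Λ M)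
    (hC0 : ContainsZero C) (hCiso : ClosedUnderIso C)
    (hCsum : ClosedUnderSums C) (hCext : ClosedUnderExtensions C)
    (hCproj : EnoughCProjectives C) (hCcov : CovariantlyFinite C) :
    ∀ (X Y : ModuleCat.{u} Λ), Module.Finite Λ X → Module.Finite Λ Y →
      ∀ f : X ⟶ Y, Function.Injective f →
        ∃ (b : Arrow (ModuleCat.{u} Λ)) (g : Arrow.mk f ⟶ b), IsLeftApprox (SMono C) g := by
  classical
  intro X Y hX hY f hf
  -- left C-approximation of Y
  obtain ⟨CY, b, hbC, hb⟩ := hCcov Y hY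
  haveI hCYfin : Module.Finite Λ CY := hCfd CY hbC
  -- the quotient R = CY / im (b ∘ f)
  set Rq : Submodule Λ CY := LinearMap.range (f ≫ b).hom with hRq
  let R : ModuleCat.{u} Λ := ModuleCat.of Λ (CY ⧸ Rq)
  let ρ : CY ⟶ R := ModuleCat.ofHom Rq.mkQ
  haveI hRfin : Module.Finite Λ R := by
    show Module.Finite Λ (CY ⧸ Rq); infer_instance
  -- left C-approximation of R
  obtain ⟨CR, c', hcC, hc⟩ := hCcov R hRfin
  let γ : CY ⟶ CR := ρ ≫ c'
  -- enough projectives for CR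
  obtain ⟨P₀, Ω, hP₀, hΩ, qΩ, πm, hqinj, hπsurj, hexΩ⟩ := hCproj CR hcC
  -- the target object
  let Bh : ModuleCat.{u} Λ := ModuleCat.of Λ (CY × P₀)
  have hBh : Bh ∈ C := hCiso _ _ (ModuleCat.biprodIsoProd CY P₀) (hCsum CY P₀ hbC hP₀.1)
  let gh : Bh ⟶ CR := ModuleCat.ofHom (LinearMap.coprod γ.hom πm.hom)
  let Asub : Submodule Λ (CY × P₀) := LinearMap.ker gh.hom
  let Ah : ModuleCat.{u} Λ := ModuleCat.of Λ Asub
  let mh : Ah ⟶ Bh := ModuleCat.ofHom Asub.subtype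
  -- Ah ∈ C via the extension 0 → Ω → Ah → CY → 0
  have he₁mem : ∀ w : Ω, ((LinearMap.inr Λ CY P₀).comp qΩ.hom) w ∈ Asub := by
    intro w
    show γ (0 : CY) + πm (qΩ w) = 0
    rw [map_zero, zero_add]
    exact (hexΩ (qΩ w)).mpr ⟨w, rfl⟩
  let e₁ : Ω ⟶ Ah := ModuleCat.ofHom (LinearMap.codRestrict Asub _ he₁mem)
  let e₂ : Ah ⟶ CY := ModuleCat.ofHom ((LinearMap.fst Λ CY P₀).comp Asub.subtype)
  have hsesA : ShortExactSeq e₁ e₂ := by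
    refine ⟨?_, ?_, ?_⟩
    · intro w₁ w₂ h
      apply hqinj
      exact congrArg (fun v => (Subtype.val v).2) h
    · intro x
      obtain ⟨p, hp⟩ := hπsurj (-(γ x))
      refine ⟨⟨(x, p), ?_⟩, rfl⟩
      show γ x + πm p = 0
      rw [hp]; exact add_neg_cancel _
    · rintro ⟨⟨x, p⟩, hmem⟩
      constructor
      · intro hv
        have hv1 : x = 0 := hv
        have hv2 : γ x + πm p = 0 := hmem
        rw [hv1, map_zero, zero_add] at hv2
        obtain ⟨w, hw⟩ := (hexΩ _).mp hv2
        refine ⟨w, ?_⟩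
        apply Subtype.ext
        apply Prod.ext
        · exact hv1.symm
        · exact hw
      · rintro ⟨w, hw⟩
        rw [← hw]
        rfl
  have hAh : Ah ∈ C := hCext Ω Ah CY e₁ e₂ hΩ hbC hsesA
  -- mh is an inflation
  have hsesB : ShortExactSeq mh gh := by
    refine ⟨Subtype.val_injective, ?_, ?_⟩
    · intro z
      obtain ⟨p, hp⟩ := hπsurj z
      refine ⟨(0, p), ?_⟩
      show γ 0 + πm p = z
      rw [map_zero, zero_add, hp]
    · intro v
      constructor
      · intro hv
        exact ⟨⟨v, hv⟩, rfl⟩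
      · rintro ⟨w, rfl⟩
        exact w.2
  have hInf : Arrow.mk mh ∈ SMono C := ⟨hAh, hBh, Subtype.val_injective, CR, hcC, gh, hsesB⟩
  -- the approximation morphism
  let vh : Y ⟶ Bh := ModuleCat.ofHom (LinearMap.prod b.hom (0 : Y →ₗ[Λ] P₀))
  have huh : ∀ x : X, (vh.hom.comp f.hom) x ∈ Asub := by
    intro x
    show γ (b (f x)) + πm 0 = 0
    rw [map_zero, add_zero]
    show c' (ρ (b (f x))) = 0
    have : ρ (b (f x)) = 0 := by
      rw [show ρ (b (f x)) = Rq.mkQ (b (f x)) from rfl, Submodule.mkQ_apply,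
        Submodule.Quotient.mk_eq_zero]
      exact ⟨x, rfl⟩
    rw [this, map_zero]
  let uh : X ⟶ Ah := ModuleCat.ofHom (LinearMap.codRestrict Asub _ huh)
  have hcomm1 : uh ≫ mh = (Arrow.mk f).hom ≫ vh := by
    apply ModuleCat.hom_ext; apply LinearMap.ext; intro x; rfl
  refine ⟨Arrow.mk mh, Arrow.homMk (u := uh) (v := vh) hcomm1, hInf, ?_⟩
  -- universality
  intro W hW φ
  obtain ⟨hA, hB, hminj, Z, hZ, gZ, hginj, hgsurj, hexm⟩ := hW
  -- factor φ.right through b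
  obtain ⟨t₁, ht₁⟩ := hb W.right hB φ.right
  have ht₁' : ∀ y : Y, t₁ (b y) = φ.right y := fun y => congrArg (fun g => g y) ht₁
  have hwφ : ∀ x : X, φ.right (f x) = W.hom (φ.left x) :=
    fun x => (congrArg (fun g => g x) (Arrow.w φ)).symm
  -- g ∘ t₁ kills Rq
  have hkill : Rq ≤ LinearMap.ker (gZ.hom.comp t₁.hom) := by
    rintro y ⟨x, rfl⟩
    show gZ (t₁ (b (f x))) = 0
    rw [ht₁', hwφ]
    exact (hexm _).mpr ⟨φ.left x, rfl⟩
  let δ' : R ⟶ Z := ModuleCat.ofHom (Rq.liftQ _ hkill)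
  obtain ⟨z', hz'⟩ := hc Z hZ δ'
  have hz'' : ∀ r : R, z' (c' r) = δ' r := fun r => congrArg (fun g => g r) hz'
  have hγz : ∀ x : CY, z' (γ x) = gZ (t₁ x) := by
    intro x
    show z' (c' (ρ x)) = gZ (t₁ x)
    rw [hz'']
    rfl
  -- lift z' ∘ πm along gZ using projectivity of P₀
  let eE : (W.right × P₀) →ₗ[Λ] Z :=
    LinearMap.coprod gZ.hom (-(z'.hom.comp πm.hom))
  let Esub : Submodule Λ (W.right × P₀) := LinearMap.ker eE
  let E : ModuleCat.{u} Λ := ModuleCat.of Λ Esub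
  have hιmem : ∀ a : W.left, ((LinearMap.inl Λ W.right P₀).comp W.hom.hom) a ∈ Esub := by
    intro a
    show gZ (W.hom a) + (-(z' (πm 0))) = 0
    rw [map_zero, map_zero, neg_zero, add_zero]
    exact (hexm _).mpr ⟨a, rfl⟩
  let ιE : W.left ⟶ E := ModuleCat.ofHom (LinearMap.codRestrict Esub _ hιmem)
  let prE : E ⟶ P₀ := ModuleCat.ofHom ((LinearMap.snd Λ W.right P₀).comp Esub.subtype)
  have hsesE : ShortExactSeq ιE prE := by
    refine ⟨?_, ?_, ?_⟩
    · intro a₁ a₂ h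
      apply hminj
      exact congrArg (fun v => (Subtype.val v).1) h
    · intro w
      obtain ⟨β, hβ⟩ := hgsurj (z' (πm w))
      refine ⟨⟨(β, w), ?_⟩, rfl⟩
      show gZ β + (-(z' (πm w))) = 0
      rw [hβ]; exact add_neg_cancel _
    · rintro ⟨⟨β, p⟩, hmem⟩
      constructor
      · intro hv
        have hv2 : p = 0 := hv
        have hv1 : gZ β + (-(z' (πm p))) = 0 := hmem
        rw [hv2, map_zero, map_zero, neg_zero, add_zero] at hv1
        obtain ⟨a, ha⟩ := (hexm _).mp hv1
        refine ⟨a, ?_⟩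
        apply Subtype.ext
        apply Prod.ext
        · exact ha
        · exact hv2.symm
      · rintro ⟨a, ha⟩
        rw [← ha]
        rfl
  have hE : E ∈ C := hCext W.left E P₀ ιE prE hA hP₀.1 hsesE
  obtain ⟨s, hs⟩ := hP₀.2 W.left E hA hE ιE prE hsesE
  have hs' : ∀ w : P₀, (s w).1.2 = w :=
    fun w => congrArg (fun g => g w) hs
  let t₂ : P₀ ⟶ W.right := s ≫ ModuleCat.ofHom ((LinearMap.fst Λ W.right P₀).comp Esub.subtype)
  have ht₂ : ∀ w : P₀, gZ (t₂ w) = z' (πm w) := by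
    intro w
    have h2 : gZ (s w).1.1 + (-(z' (πm (s w).1.2))) = 0 := (s w).2
    rw [hs' w] at h2
    rw [add_neg_eq_zero] at h2
    exact h2
  -- assemble t
  let t : Bh ⟶ W.right := ModuleCat.ofHom (LinearMap.coprod t₁.hom t₂.hom)
  have hgt : ∀ v : CY × P₀, gZ (t v) = z' (gh v) := by
    intro v
    show gZ (t₁ v.1 + t₂ v.2) = z' (γ v.1 + πm v.2)
    rw [map_add, map_add, hγz, ht₂]
  -- construct s₀
  have hmemA : ∀ v : Ah, (t.hom.comp mh.hom) v ∈
      LinearMap.range W.hom.hom := by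
    intro v
    have h0 : gZ (t v.1) = 0 := by
      rw [hgt]
      have hv : gh v.1 = 0 := v.2
      rw [hv, map_zero]
    obtain ⟨a, ha⟩ := (hexm _).mp h0
    exact ⟨a, ha⟩
  let eqm := LinearEquiv.ofInjective W.hom.hom hminj
  let s₀ : Ah ⟶ W.left :=
    ModuleCat.ofHom ((eqm.symm.toLinearMap).comp (LinearMap.codRestrict _ _ hmemA))
  have hms₀ : ∀ v : Ah, W.hom (s₀ v) = t (mh v) := by
    intro v
    set y : LinearMap.range W.hom.hom := ⟨t (mh v), hmemA v⟩ with hy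
    show W.hom (eqm.symm y) = t (mh v)
    have h1 : eqm (eqm.symm y) = y := eqm.apply_symm_apply y
    have h2 : (eqm (eqm.symm y)).1 = W.hom (eqm.symm y) := LinearEquiv.ofInjective_apply _ _
    rw [h1] at h2
    exact h2.symm
  have hcomm2 : s₀ ≫ W.hom = mh ≫ t := by
    apply ModuleCat.hom_ext; apply LinearMap.ext; intro v; exact hms₀ v
  refine ⟨Arrow.homMk (u := s₀) (v := t) hcomm2, ?_⟩
  apply CommaMorphism.ext
  · show uh ≫ s₀ = φ.left
    apply ModuleCat.hom_ext; apply LinearMap.ext; intro x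
    apply hminj
    show W.hom (s₀ (uh x)) = W.hom (φ.left x)
    rw [hms₀]
    show t₁ (b (f x)) + t₂ 0 = W.hom (φ.left x)
    rw [map_zero, add_zero, ht₁', hwφ]
  · show vh ≫ t = φ.right
    apply ModuleCat.hom_ext; apply LinearMap.ext; intro y
    show t₁ (b y) + t₂ 0 = φ.right y
    rw [map_zero, add_zero, ht₁']
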